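/- Suppose rank(Σ_{l=1}^L B_l) = K and |λ_K(Σ_{l=1}^L B_l)| ≥ c₁ L for some constant c₁ > 0. Let U, Â, Û and the orthogonal matrix Q be as follows: U ∈ R^{n×K} has orthonormal columns that are eigenvectors of Ω_sum corresponding to its K nonzero eigenvalues, ∈ R^{n×n} is symmetric, Û ∈ R^{n×K} has orthonormal columns that are eigenvectors of for its K largest-magnitude eigenvalues, every row of Û is nonzero, and Q is a K×K orthogonal matrix achieving ‖ÛQ − U‖_F ≤ 2√(2K)‖Â − Ω_sum‖/(c₁θ_min²n_minL). Let U_* and Û_* be obtained from U and Û by normalizing each row to unit Euclidean norm. Then ‖Û_*Q − U_*‖_F ≤ 4√(2K)·θ_max√(n_max)·‖Â − Ω_sum‖ / (c₁ θ_min³ n_min L). -/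

import Mathlib

open Matrix MeasureTheory ProbabilityTheory
open scoped BigOperators ENNReal

noncomputable section

/-- Euclidean norm of a finite real vector. -/
def vecNorm {m : ℕ} (v : Fin m → ℝ) : ℝ := Real.sqrt (∑ i, v i ^ 2)

/-- Frobenius norm of a real matrix. -/
def frobNorm {m p : ℕ} (M : Matrix (Fin m) (Fin p) ℝ) : ℝ :=
  Real.sqrt (∑ i, ∑ j, M i j ^ 2)

/-- Spectral norm (ℓ² operator norm) of a real matrix. -/
def specNorm {m p : ℕ} (M : Matrix (Fin m) (Fin p) ℝ) : ℝ :=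
  sSup ((fun x => vecNorm (M.mulVec x)) '' {x : Fin p → ℝ | vecNorm x ≤ 1})

open Classical in
/-- The k-th largest (1-indexed) eigenvalue in magnitude of a real symmetric matrix
(`0` if the matrix is not Hermitian). -/
def kthAbsEig {m : ℕ} (M : Matrix (Fin m) (Fin m) ℝ) (k : ℕ) : ℝ :=
  if hM : M.IsHermitian then
    (((Finset.univ : Finset (Fin m)).val.map fun i => |hM.eigenvalues i|).sort (· ≤ ·)).getD
      (m - k) 0
  else 0

/-- `Z` is a community membership matrix: 0/1 entries, exactly one 1 per row,
every column nonzero. -/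
def IsMembership {n K : ℕ} (Z : Matrix (Fin n) (Fin K) ℝ) : Prop :=
  (∀ i k, Z i k = 0 ∨ Z i k = 1) ∧ (∀ i, ∑ k, Z i k = 1) ∧ (∀ k, ∃ i, Z i k = 1)

/-- The MLDCSBM model hypotheses on the parameters `Z`, `θ`, `B`. -/
def MLDCSBM {n L K : ℕ} (Z : Matrix (Fin n) (Fin K) ℝ) (θ : Fin n → ℝ)
    (B : Fin L → Matrix (Fin K) (Fin K) ℝ) : Prop :=
  IsMembership Z ∧ (∀ i, 0 < θ i ∧ θ i ≤ 1) ∧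
    (∀ l, (B l).IsSymm ∧ ∀ a b, 0 ≤ B l a b ∧ B l a b ≤ 1)

/-- Ω_l = Θ Z B_l Zᵀ Θ. -/
def OmegaL {n K : ℕ} (θ : Fin n → ℝ) (Z : Matrix (Fin n) (Fin K) ℝ)
    (Bl : Matrix (Fin K) (Fin K) ℝ) : Matrix (Fin n) (Fin n) ℝ :=
  Matrix.diagonal θ * Z * Bl * Zᵀ * Matrix.diagonal θ

def thetaMin {n : ℕ} (θ : Fin n → ℝ) : ℝ := sInf (Set.range θ)
def thetaMax {n : ℕ} (θ : Fin n → ℝ) : ℝ := sSup (Set.range θ)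

/-- Minimum community size. -/
def nMin {n K : ℕ} (Z : Matrix (Fin n) (Fin K) ℝ) : ℝ :=
  sInf (Set.range fun k : Fin K => ∑ i, Z i k)

/-- Maximum community size. -/
def nMax {n K : ℕ} (Z : Matrix (Fin n) (Fin K) ℝ) : ℝ :=
  sSup (Set.range fun k : Fin K => ∑ i, Z i k)

/-- Column `k` of a matrix, as a vector. -/
def colVec {n K : ℕ} (U : Matrix (Fin n) (Fin K) ℝ) (k : Fin K) : Fin n → ℝ := fun i => U i k

/-- Row-normalized version of a matrix: each row divided by its Euclidean norm. -/
def rowNormalize {n K : ℕ} (U : Matrix (Fin n) (Fin K) ℝ) : Matrix (Fin n) (Fin K) ℝ :=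
  fun i k => U i k / vecNorm (fun j => U i j)

/-- Diagonal degree matrix of a square matrix. -/
def degDiag {n : ℕ} (M : Matrix (Fin n) (Fin n) ℝ) : Matrix (Fin n) (Fin n) ℝ :=
  Matrix.diagonal fun i => ∑ j, M i j

/-! ### Auxiliary lemmas -/

lemma vecNorm_nonneg' {m : ℕ} (v : Fin m → ℝ) : 0 ≤ vecNorm v := Real.sqrt_nonneg _

lemma vecNorm_sq' {m : ℕ} (v : Fin m → ℝ) : vecNorm v ^ 2 = ∑ i, v i ^ 2 := by
  rw [vecNorm, Real.sq_sqrt]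
  exact Finset.sum_nonneg fun i _ => sq_nonneg _

lemma vecNorm_pos' {m : ℕ} {v : Fin m → ℝ} (hv : v ≠ 0) : 0 < vecNorm v := by
  rw [vecNorm]
  apply Real.sqrt_pos.2
  obtain ⟨i, hi⟩ : ∃ i, v i ≠ 0 := Function.ne_iff.mp hv
  refine Finset.sum_pos' (fun j _ => sq_nonneg _) ⟨i, Finset.mem_univ i, by positivity⟩

lemma vecNorm_eq_norm' {m : ℕ} (v : Fin m → ℝ) :
    vecNorm v = ‖(WithLp.equiv 2 (Fin m → ℝ)).symm v‖ := by
  rw [EuclideanSpace.norm_eq, vecNorm]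
  congr 1
  refine Finset.sum_congr rfl fun i _ => ?_
  rw [Real.norm_eq_abs, sq_abs]
  rfl

lemma normalize_sub_le' {E : Type*} [NormedAddCommGroup E] [NormedSpace ℝ E]
    (x y : E) (hx : 0 < ‖x‖) (hy : 0 < ‖y‖) :
    ‖‖x‖⁻¹ • x - ‖y‖⁻¹ • y‖ ≤ 2 * ‖x - y‖ / ‖y‖ := by
  have key : ‖x‖⁻¹ • x - ‖y‖⁻¹ • y = ‖y‖⁻¹ • (x - y) + (‖x‖⁻¹ - ‖y‖⁻¹) • x := by
    module
  rw [key]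
  have h1 : ‖‖y‖⁻¹ • (x - y)‖ = ‖x - y‖ / ‖y‖ := by
    rw [norm_smul, Real.norm_eq_abs, abs_inv, abs_of_pos hy]
    ring
  have h2 : ‖(‖x‖⁻¹ - ‖y‖⁻¹) • x‖ ≤ ‖x - y‖ / ‖y‖ := by
    rw [norm_smul, Real.norm_eq_abs]
    have hxy : ‖x‖⁻¹ - ‖y‖⁻¹ = (‖y‖ - ‖x‖) / (‖x‖ * ‖y‖) := by
      field_simp
    rw [hxy, abs_div, abs_of_pos (by positivity : (0:ℝ) < ‖x‖ * ‖y‖)]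
    have h3 : |‖y‖ - ‖x‖| ≤ ‖x - y‖ := by
      rw [← norm_sub_rev]
      exact abs_norm_sub_norm_le y x
    calc |‖y‖ - ‖x‖| / (‖x‖ * ‖y‖) * ‖x‖ = |‖y‖ - ‖x‖| / ‖y‖ := by
          field_simp
      _ ≤ ‖x - y‖ / ‖y‖ := by gcongr
  calc ‖‖y‖⁻¹ • (x - y) + (‖x‖⁻¹ - ‖y‖⁻¹) • x‖ ≤ ‖‖y‖⁻¹ • (x - y)‖ + ‖(‖x‖⁻¹ - ‖y‖⁻¹) • x‖ :=
        norm_add_le _ _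
    _ ≤ ‖x - y‖ / ‖y‖ + ‖x - y‖ / ‖y‖ := by rw [h1]; linarith [h2]
    _ = 2 * ‖x - y‖ / ‖y‖ := by ring

lemma vec_normalize_sub_le' {m : ℕ} (x y : Fin m → ℝ)
    (hx : 0 < vecNorm x) (hy : 0 < vecNorm y) :
    vecNorm (fun k => x k / vecNorm x - y k / vecNorm y) ≤
      2 * vecNorm (fun k => x k - y k) / vecNorm y := by
  set x' : EuclideanSpace ℝ (Fin m) := (WithLp.equiv 2 (Fin m → ℝ)).symm x
  set y' : EuclideanSpace ℝ (Fin m) := (WithLp.equiv 2 (Fin m → ℝ)).symm y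
  have hx' : vecNorm x = ‖x'‖ := vecNorm_eq_norm' x
  have hy' : vecNorm y = ‖y'‖ := vecNorm_eq_norm' y
  have h1 : vecNorm (fun k => x k / vecNorm x - y k / vecNorm y) =
      ‖‖x'‖⁻¹ • x' - ‖y'‖⁻¹ • y'‖ := by
    rw [vecNorm_eq_norm']
    congr 1
    ext k
    simp [hx', hy', div_eq_inv_mul]
    rfl
  have h2 : vecNorm (fun k => x k - y k) = ‖x' - y'‖ := by
    rw [vecNorm_eq_norm']; rfl
  rw [h1, h2, hy']
  exact normalize_sub_le' x' y' (hx' ▸ hx) (hy' ▸ hy)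

lemma frob_le_of_rows' {m p : ℕ} (A B : Matrix (Fin m) (Fin p) ℝ) (c : ℝ) (hc : 0 ≤ c)
    (h : ∀ i, vecNorm (fun k => A i k) ≤ c * vecNorm (fun k => B i k)) :
    frobNorm A ≤ c * frobNorm B := by
  have key : ∑ i, ∑ j, A i j ^ 2 ≤ c ^ 2 * ∑ i, ∑ j, B i j ^ 2 := by
    rw [Finset.mul_sum]
    refine Finset.sum_le_sum fun i _ => ?_
    have h2 : vecNorm (fun k => A i k) ^ 2 ≤ (c * vecNorm (fun k => B i k)) ^ 2 :=
      pow_le_pow_left₀ (vecNorm_nonneg' _) (h i) 2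
    rw [vecNorm_sq', mul_pow, vecNorm_sq'] at h2
    exact h2
  rw [frobNorm, frobNorm]
  calc Real.sqrt (∑ i, ∑ j, A i j ^ 2) ≤ Real.sqrt (c ^ 2 * ∑ i, ∑ j, B i j ^ 2) :=
        Real.sqrt_le_sqrt key
    _ = c * Real.sqrt (∑ i, ∑ j, B i j ^ 2) := by
        rw [Real.sqrt_mul (by positivity), Real.sqrt_sq hc]

lemma row_sq_eq' {m p : ℕ} (M : Matrix (Fin m) (Fin p) ℝ) (i : Fin m) :
    ∑ k, M i k ^ 2 = (M * Mᵀ) i i := by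
  rw [Matrix.mul_apply]
  refine Finset.sum_congr rfl fun k _ => ?_
  rw [Matrix.transpose_apply, sq]

lemma mem_struct' {n K : ℕ} {Z : Matrix (Fin n) (Fin K) ℝ} (hZ : IsMembership Z) :
    ∀ i, ∃ k, Z i k = 1 ∧ ∀ a, a ≠ k → Z i a = 0 := by
  obtain ⟨h01, hrow, -⟩ := hZ
  intro i
  have hex : ∃ k, Z i k = 1 := by
    by_contra h
    push_neg at h
    have h0 : ∀ k ∈ Finset.univ, Z i k = 0 := fun k _ => (h01 i k).resolve_right (h k)
    have := Finset.sum_eq_zero h0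
    rw [hrow i] at this
    norm_num at this
  obtain ⟨k, hk⟩ := hex
  refine ⟨k, hk, fun a ha => ?_⟩
  by_contra h
  have ha1 : Z i a = 1 := (h01 i a).resolve_left h
  have h2 : (2:ℝ) ≤ ∑ b, Z i b := by
    have hle : Z i k + Z i a ≤ ∑ b, Z i b := by
      have he := Finset.add_sum_erase Finset.univ (Z i) (Finset.mem_univ k)
      rw [← he]
      have hia : Z i a ≤ ∑ b ∈ Finset.univ.erase k, Z i b := by
        apply Finset.single_le_sum (f := Z i) (fun b _ => ?_)
          (Finset.mem_erase.2 ⟨ha, Finset.mem_univ a⟩)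
        rcases h01 i b with h' | h' <;> rw [h'] <;> norm_num
      linarith
    rw [hk, ha1] at hle; linarith
  rw [hrow i] at h2; linarith

lemma theta_min_le' {n : ℕ} (θ : Fin n → ℝ) (i : Fin n) : thetaMin θ ≤ θ i :=
  csInf_le (Set.Finite.bddBelow (Set.finite_range θ)) ⟨i, rfl⟩

lemma theta_le_max' {n : ℕ} (θ : Fin n → ℝ) (i : Fin n) : θ i ≤ thetaMax θ :=
  le_csSup (Set.Finite.bddAbove (Set.finite_range θ)) ⟨i, rfl⟩

lemma theta_min_pos' {n : ℕ} (hn : 0 < n) {θ : Fin n → ℝ} (hθ : ∀ i, 0 < θ i) :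
    0 < thetaMin θ := by
  have hne : (Set.range θ).Nonempty := Set.range_nonempty_iff_nonempty.2 ⟨⟨0, hn⟩⟩
  obtain ⟨i, hi⟩ := hne.csInf_mem (Set.finite_range θ)
  rw [thetaMin, ← hi]
  exact hθ i

lemma col_le_nMax' {n K : ℕ} (Z : Matrix (Fin n) (Fin K) ℝ) (k : Fin K) :
    ∑ i, Z i k ≤ nMax Z :=
  le_csSup (Set.Finite.bddAbove (Set.finite_range _)) ⟨k, rfl⟩

lemma nMin_pos' {n K : ℕ} (hK : 0 < K) {Z : Matrix (Fin n) (Fin K) ℝ} (hZ : IsMembership Z) :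
    0 < nMin Z := by
  have hne : (Set.range fun k : Fin K => ∑ i, Z i k).Nonempty :=
    Set.range_nonempty_iff_nonempty.2 ⟨⟨0, hK⟩⟩
  obtain ⟨k, hk⟩ := hne.csInf_mem (Set.finite_range _)
  rw [nMin, ← hk]
  obtain ⟨i, hi⟩ := hZ.2.2 k
  calc (0:ℝ) < 1 := one_pos
    _ ≤ ∑ i, Z i k := by
        rw [← hi]
        apply Finset.single_le_sum (fun j _ => ?_) (Finset.mem_univ i)
        rcases hZ.1 j k with h | h <;> rw [h] <;> norm_num

lemma nMax_pos' {n K : ℕ} (hK : 0 < K) {Z : Matrix (Fin n) (Fin K) ℝ} (hZ : IsMembership Z) :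
    0 < nMax Z := by
  obtain ⟨i, hi⟩ := hZ.2.2 ⟨0, hK⟩
  have h1 : (1:ℝ) ≤ ∑ j, Z j ⟨0, hK⟩ := by
    rw [← hi]
    apply Finset.single_le_sum (fun j _ => ?_) (Finset.mem_univ i)
    rcases hZ.1 j ⟨0, hK⟩ with h | h <;> rw [h] <;> norm_num
  linarith [col_le_nMax' Z ⟨0, hK⟩]

lemma rowNorm_lb' {n K : ℕ} (hn : 0 < n) (hK : 0 < K)
    {Z : Matrix (Fin n) (Fin K) ℝ} (hZ : IsMembership Z)
    {θ : Fin n → ℝ} (hθ : ∀ i, 0 < θ i ∧ θ i ≤ 1)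
    (Bs : Matrix (Fin K) (Fin K) ℝ)
    (U : Matrix (Fin n) (Fin K) ℝ)
    (hUorth : Uᵀ * U = 1)
    (hUeig : ∀ k, ∃ μ : ℝ, μ ≠ 0 ∧
      (Matrix.diagonal θ * Z * Bs * Zᵀ * Matrix.diagonal θ).mulVec (colVec U k)
        = μ • colVec U k)
    (i : Fin n) :
    thetaMin θ / (thetaMax θ * Real.sqrt (nMax Z)) ≤ vecNorm (fun k => U i k) := by
  classical
  choose ℓ hℓ1 hℓ0 using mem_struct' hZ
  have hZind : ∀ i g, Z i g = if ℓ i = g then 1 else 0 := by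
    intro i g
    by_cases h : ℓ i = g
    · rw [if_pos h, ← h, hℓ1]
    · rw [if_neg h]; exact hℓ0 i g (fun hc => h hc.symm)
  choose μ hμne hμeig using hUeig
  set W : Matrix (Fin K) (Fin K) ℝ :=
    fun g k => (μ k)⁻¹ * ((Bs * Zᵀ * Matrix.diagonal θ).mulVec (colVec U k)) g with hW
  have hUW : ∀ j k, U j k = θ j * W (ℓ j) k := by
    intro j k
    have h1 : (Matrix.diagonal θ * Z * Bs * Zᵀ * Matrix.diagonal θ).mulVec (colVec U k)
        = (Matrix.diagonal θ * Z).mulVec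
            ((Bs * Zᵀ * Matrix.diagonal θ).mulVec (colVec U k)) := by
      rw [Matrix.mulVec_mulVec]
      simp [Matrix.mul_assoc]
    have h2 := hμeig k
    rw [h1] at h2
    have h3 := congrFun h2 j
    simp only [Pi.smul_apply, smul_eq_mul] at h3
    set w := (Bs * Zᵀ * Matrix.diagonal θ).mulVec (colVec U k) with hw
    have h4 : ((Matrix.diagonal θ * Z).mulVec w) j = θ j * w (ℓ j) := by
      rw [Matrix.mulVec]
      show ∑ a, (Matrix.diagonal θ * Z) j a * w a = _
      have hd : ∀ a, (Matrix.diagonal θ * Z) j a = θ j * Z j a := by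
        intro a
        rw [Matrix.diagonal_mul]
      rw [Finset.sum_congr rfl fun a _ => by rw [hd a, hZind j a]]
      rw [Finset.sum_eq_single (ℓ j)]
      · simp
      · intro b _ hb
        rw [if_neg (fun h => hb h.symm)]
        ring
      · intro h; exact absurd (Finset.mem_univ _) h
    rw [h4] at h3
    have hcv : U j k = colVec U k j := rfl
    have hWval : W (ℓ j) k = (μ k)⁻¹ * w (ℓ j) := rfl
    have h6 : colVec U k j = (μ k)⁻¹ * (θ j * w (ℓ j)) := by
      rw [h3, inv_mul_cancel_left₀ (hμne k)]
    rw [hcv, hWval, h6]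
    ring
  set Dv : Fin K → ℝ := fun g => ∑ j, if ℓ j = g then θ j ^ 2 else 0 with hDv
  have hDpos : ∀ g, 0 < Dv g := by
    intro g
    obtain ⟨j, hj⟩ := hZ.2.2 g
    have hjg : ℓ j = g := by
      by_contra h
      rw [hℓ0 j g (fun hc => h hc.symm)] at hj
      norm_num at hj
    refine Finset.sum_pos' (fun b _ => ?_) ⟨j, Finset.mem_univ j, ?_⟩
    · split <;> positivity
    · rw [if_pos hjg]
      exact pow_pos (hθ j).1 2
  have hgroup : ∀ a b, ∑ g, Dv g * (W g a * W g b) = (1 : Matrix (Fin K) (Fin K) ℝ) a b := by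
    intro a b
    have h1 : (Uᵀ * U) a b = ∑ j, θ j ^ 2 * (W (ℓ j) a * W (ℓ j) b) := by
      rw [Matrix.mul_apply]
      refine Finset.sum_congr rfl fun j _ => ?_
      rw [Matrix.transpose_apply, hUW j a, hUW j b]
      ring
    have h2 : ∑ j, θ j ^ 2 * (W (ℓ j) a * W (ℓ j) b)
        = ∑ g, ∑ j, if ℓ j = g then θ j ^ 2 * (W g a * W g b) else 0 := by
      rw [Finset.sum_comm]
      refine Finset.sum_congr rfl fun j _ => ?_
      rw [Finset.sum_eq_single (ℓ j)]
      · rw [if_pos rfl]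
      · intro g _ hg
        rw [if_neg (fun h => hg h.symm)]
      · intro h; exact absurd (Finset.mem_univ _) h
    rw [← hUorth, h1, h2]
    refine Finset.sum_congr rfl fun g _ => ?_
    rw [hDv]
    simp only
    rw [Finset.sum_mul]
    refine Finset.sum_congr rfl fun j _ => ?_
    split <;> ring
  set V : Matrix (Fin K) (Fin K) ℝ := fun g k => Real.sqrt (Dv g) * W g k with hV
  have hVTV : Vᵀ * V = 1 := by
    ext a b
    rw [Matrix.mul_apply, ← hgroup a b]
    refine Finset.sum_congr rfl fun g _ => ?_
    rw [Matrix.transpose_apply]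
    show (Real.sqrt (Dv g) * W g a) * (Real.sqrt (Dv g) * W g b) = _
    rw [show (Real.sqrt (Dv g) * W g a) * (Real.sqrt (Dv g) * W g b)
        = (Real.sqrt (Dv g) * Real.sqrt (Dv g)) * (W g a * W g b) from by ring,
      Real.mul_self_sqrt (le_of_lt (hDpos g))]
  have hVVT : V * Vᵀ = 1 := mul_eq_one_comm.mp hVTV
  have hWrow : ∀ g, ∑ k, W g k ^ 2 = (Dv g)⁻¹ := by
    intro g
    have h1 : (V * Vᵀ) g g = Dv g * ∑ k, W g k ^ 2 := by
      rw [Matrix.mul_apply, Finset.mul_sum]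
      refine Finset.sum_congr rfl fun k _ => ?_
      rw [Matrix.transpose_apply]
      show (Real.sqrt (Dv g) * W g k) * (Real.sqrt (Dv g) * W g k) = _
      rw [show (Real.sqrt (Dv g) * W g k) * (Real.sqrt (Dv g) * W g k)
          = (Real.sqrt (Dv g) * Real.sqrt (Dv g)) * (W g k * W g k) from by ring,
        Real.mul_self_sqrt (le_of_lt (hDpos g))]
      ring
    rw [hVVT, Matrix.one_apply_eq] at h1
    exact eq_inv_of_mul_eq_one_right h1.symm
  have hDle : ∀ g, Dv g ≤ thetaMax θ ^ 2 * nMax Z := by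
    intro g
    have h1 : Dv g ≤ ∑ j, thetaMax θ ^ 2 * Z j g := by
      refine Finset.sum_le_sum fun j _ => ?_
      rw [hZind j g]
      by_cases h : ℓ j = g
      · rw [if_pos h, if_pos h, mul_one]
        have := theta_le_max' θ j
        have h0 := (hθ j).1
        nlinarith
      · rw [if_neg h, if_neg h, mul_zero]
    have hmaxpos : 0 < thetaMax θ := lt_of_lt_of_le (hθ i).1 (theta_le_max' θ i)
    calc Dv g ≤ thetaMax θ ^ 2 * ∑ j, Z j g := by rw [Finset.mul_sum]; exact h1
      _ ≤ thetaMax θ ^ 2 * nMax Z :=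
          mul_le_mul_of_nonneg_left (col_le_nMax' Z g) (by positivity)
  have hmaxpos : 0 < thetaMax θ := lt_of_lt_of_le (hθ i).1 (theta_le_max' θ i)
  have hnmaxpos : 0 < nMax Z := nMax_pos' hK hZ
  have hminpos : 0 < thetaMin θ := theta_min_pos' hn (fun j => (hθ j).1)
  have hrow : ∑ k, U i k ^ 2 = θ i ^ 2 * (Dv (ℓ i))⁻¹ := by
    rw [← hWrow (ℓ i), Finset.mul_sum]
    refine Finset.sum_congr rfl fun k _ => ?_
    rw [hUW i k]
    ring
  have hlb : (thetaMin θ / (thetaMax θ * Real.sqrt (nMax Z))) ^ 2 ≤ ∑ k, U i k ^ 2 := by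
    rw [hrow, div_pow, mul_pow, Real.sq_sqrt (le_of_lt hnmaxpos)]
    rw [div_le_iff₀ (by positivity)]
    have h1 : thetaMin θ ^ 2 ≤ θ i ^ 2 := by
      have := theta_min_le' θ i
      nlinarith
    have h3 : (thetaMax θ ^ 2 * nMax Z)⁻¹ ≤ (Dv (ℓ i))⁻¹ :=
      inv_anti₀ (hDpos (ℓ i)) (hDle (ℓ i))
    calc thetaMin θ ^ 2
        = thetaMin θ ^ 2 * ((thetaMax θ ^ 2 * nMax Z)⁻¹ * (thetaMax θ ^ 2 * nMax Z)) := by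
          rw [inv_mul_cancel₀ (by positivity), mul_one]
      _ ≤ θ i ^ 2 * (Dv (ℓ i))⁻¹ * (thetaMax θ ^ 2 * nMax Z) := by
          rw [← mul_assoc]
          apply mul_le_mul_of_nonneg_right _ (by positivity)
          apply mul_le_mul h1 h3 (by positivity) (by positivity)
  calc thetaMin θ / (thetaMax θ * Real.sqrt (nMax Z))
      = Real.sqrt ((thetaMin θ / (thetaMax θ * Real.sqrt (nMax Z))) ^ 2) := by
        rw [Real.sqrt_sq (by positivity)]
    _ ≤ vecNorm (fun k => U i k) := Real.sqrt_le_sqrt hlb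

theorem stmt5 {n L K : ℕ} (hn : 0 < n) (hL : 0 < L) (hK : 0 < K) (hKn : K ≤ n)
    (Z : Matrix (Fin n) (Fin K) ℝ) (θ : Fin n → ℝ)
    (B : Fin L → Matrix (Fin K) (Fin K) ℝ)
    (hmodel : MLDCSBM Z θ B)
    (c₁ : ℝ) (hc₁ : 0 < c₁)
    (hrank : (∑ l, B l).rank = K)
    (hgap : c₁ * L ≤ kthAbsEig (∑ l, B l) K)
    (U : Matrix (Fin n) (Fin K) ℝ)
    (hUorth : Uᵀ * U = 1)
    (hUeig : ∀ k, ∃ μ : ℝ, μ ≠ 0 ∧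
      (∑ l, OmegaL θ Z (B l)).mulVec (colVec U k) = μ • colVec U k)
    (Ahat : Matrix (Fin n) (Fin n) ℝ) (hAhat : Ahat.IsSymm)
    (Uhat : Matrix (Fin n) (Fin K) ℝ)
    (hUhatOrth : Uhatᵀ * Uhat = 1)
    (hUhatEig : ∀ k, ∃ μ : ℝ,
      Ahat.mulVec (colVec Uhat k) = μ • colVec Uhat k ∧ kthAbsEig Ahat K ≤ |μ|)
    (hUhatRows : ∀ i, Uhat i ≠ 0)
    (Q : Matrix (Fin K) (Fin K) ℝ) (hQ : Qᵀ * Q = 1)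
    (hQbound : frobNorm (Uhat * Q - U) ≤
      2 * Real.sqrt (2 * K) * specNorm (Ahat - ∑ l, OmegaL θ Z (B l)) /
        (c₁ * thetaMin θ ^ 2 * nMin Z * L)) :
    frobNorm (rowNormalize Uhat * Q - rowNormalize U) ≤
      4 * Real.sqrt (2 * K) * thetaMax θ * Real.sqrt (nMax Z) *
        specNorm (Ahat - ∑ l, OmegaL θ Z (B l)) /
          (c₁ * thetaMin θ ^ 3 * nMin Z * L) := by
  obtain ⟨hZmem, hθ, hBprop⟩ := hmodel
  have hθpos : ∀ i, 0 < θ i := fun i => (hθ i).1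
  have hminpos : 0 < thetaMin θ := theta_min_pos' hn hθpos
  have hmaxpos : 0 < thetaMax θ := lt_of_lt_of_le (hθpos ⟨0, hn⟩) (theta_le_max' θ _)
  have hnmaxpos : 0 < nMax Z := nMax_pos' hK hZmem
  have hnminpos : 0 < nMin Z := nMin_pos' hK hZmem
  have hLpos : (0:ℝ) < (L:ℝ) := by exact_mod_cast hL
  set S := specNorm (Ahat - ∑ l, OmegaL θ Z (B l)) with hS
  set m0 : ℝ := thetaMin θ / (thetaMax θ * Real.sqrt (nMax Z)) with hm0
  have hm0pos : 0 < m0 := by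
    rw [hm0]; positivity
  set C : ℝ := 2 / m0 with hC
  have hCnn : 0 ≤ C := by
    rw [hC]; positivity
  -- factorization of Ω_sum
  have hΩ : (∑ l, OmegaL θ Z (B l))
      = Matrix.diagonal θ * Z * (∑ l, B l) * Zᵀ * Matrix.diagonal θ := by
    have hterm : ∀ l, OmegaL θ Z (B l)
        = (Matrix.diagonal θ * Z) * (B l * (Zᵀ * Matrix.diagonal θ)) := by
      intro l
      rw [OmegaL]
      simp [Matrix.mul_assoc]
    rw [Finset.sum_congr rfl fun l _ => hterm l, ← Matrix.mul_sum, ← Matrix.sum_mul]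
    simp [Matrix.mul_assoc]
  have hUlb : ∀ i, m0 ≤ vecNorm (fun k => U i k) := by
    intro i
    rw [hm0]
    exact rowNorm_lb' hn hK hZmem hθ (∑ l, B l) U hUorth (by rw [← hΩ]; exact hUeig) i
  have hQQT : Q * Qᵀ = 1 := mul_eq_one_comm.mp hQ
  have hrowbd : ∀ i, vecNorm (fun k => (rowNormalize Uhat * Q - rowNormalize U) i k)
      ≤ C * vecNorm (fun k => (Uhat * Q - U) i k) := by
    intro i
    set x : Fin K → ℝ := fun k => (Uhat * Q) i k with hx
    set y : Fin K → ℝ := fun k => U i k with hy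
    have hxnorm : vecNorm x = vecNorm (fun k => Uhat i k) := by
      rw [vecNorm, vecNorm]
      congr 1
      calc ∑ k, x k ^ 2 = ((Uhat * Q) * (Uhat * Q)ᵀ) i i := row_sq_eq' (Uhat * Q) i
        _ = (Uhat * Uhatᵀ) i i := by
            rw [Matrix.transpose_mul,
              show Uhat * Q * (Qᵀ * Uhatᵀ) = Uhat * (Q * Qᵀ) * Uhatᵀ from by
                rw [Matrix.mul_assoc, Matrix.mul_assoc, Matrix.mul_assoc],
              hQQT, Matrix.mul_one]
        _ = ∑ k, Uhat i k ^ 2 := (row_sq_eq' Uhat i).symm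
    have hUhat_pos : 0 < vecNorm (fun k => Uhat i k) := vecNorm_pos' (hUhatRows i)
    have hxpos : 0 < vecNorm x := hxnorm ▸ hUhat_pos
    have hypos : 0 < vecNorm y := lt_of_lt_of_le hm0pos (hUlb i)
    have hentry : ∀ k, (rowNormalize Uhat * Q - rowNormalize U) i k
        = x k / vecNorm x - y k / vecNorm y := by
      intro k
      rw [Matrix.sub_apply]
      have hA : (rowNormalize Uhat * Q) i k = x k / vecNorm x := by
        rw [Matrix.mul_apply, hxnorm,
          show x k = ∑ a, Uhat i a * Q a k from Matrix.mul_apply, Finset.sum_div]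
        refine Finset.sum_congr rfl fun a _ => ?_
        rw [rowNormalize]
        ring
      have hB : rowNormalize U i k = y k / vecNorm y := rfl
      rw [hA, hB]
    have hnsl := vec_normalize_sub_le' x y hxpos hypos
    calc vecNorm (fun k => (rowNormalize Uhat * Q - rowNormalize U) i k)
        = vecNorm (fun k => x k / vecNorm x - y k / vecNorm y) := by
          congr 1; funext k; exact hentry k
      _ ≤ 2 * vecNorm (fun k => x k - y k) / vecNorm y := hnsl
      _ ≤ C * vecNorm (fun k => x k - y k) := by
          rw [hC]
          have ht : 0 ≤ vecNorm (fun k => x k - y k) := vecNorm_nonneg' _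
          calc 2 * vecNorm (fun k => x k - y k) / vecNorm y
              ≤ 2 * vecNorm (fun k => x k - y k) / m0 := by
                gcongr
                exact hUlb i
            _ = 2 / m0 * vecNorm (fun k => x k - y k) := by ring
      _ = C * vecNorm (fun k => (Uhat * Q - U) i k) := rfl
  have h1 : frobNorm (rowNormalize Uhat * Q - rowNormalize U)
      ≤ C * frobNorm (Uhat * Q - U) :=
    frob_le_of_rows' _ _ C hCnn hrowbd
  have h2 : C * frobNorm (Uhat * Q - U)
      ≤ C * (2 * Real.sqrt (2 * K) * S / (c₁ * thetaMin θ ^ 2 * nMin Z * L)) :=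
    mul_le_mul_of_nonneg_left hQbound hCnn
  have h3 : C * (2 * Real.sqrt (2 * K) * S / (c₁ * thetaMin θ ^ 2 * nMin Z * L))
      = 4 * Real.sqrt (2 * K) * thetaMax θ * Real.sqrt (nMax Z) * S /
          (c₁ * thetaMin θ ^ 3 * nMin Z * L) := by
    rw [hC, hm0]
    have hsq : (0:ℝ) < Real.sqrt (nMax Z) := Real.sqrt_pos.2 hnmaxpos
    field_simp
    ring
  linarith

end
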